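/- Let K and L be convex bodies in ℝⁿ containing the origin in their interiors with K \ L = −(L \ K), and let V be a linear subspace of ℝⁿ. Then for every unit vector ξ ∈ V, the unordered pairs {h_{K|V}(ξ), h_{K|V}(−ξ)} and {h_{L|V}(ξ), h_{L|V}(−ξ)} coincide, where K|V denotes the orthogonal projection of K onto V. -/

import Mathlib

open Set

/-- The support function of `K`: `h_K(x) = sup {⟨x, y⟩ : y ∈ K}`. -/
noncomputable def supp {n : ℕ} (K : Set (EuclideanSpace ℝ (Fin n)))
    (x : EuclideanSpace ℝ (Fin n)) : ℝ :=
  sSup ((fun y => (inner ℝ x y : ℝ)) '' K)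

/-- The orthogonal projection `K|V` of a set `K` onto a subspace `V`. -/
noncomputable def projSet {n : ℕ} (V : Submodule ℝ (EuclideanSpace ℝ (Fin n)))
    (K : Set (EuclideanSpace ℝ (Fin n))) : Set (EuclideanSpace ℝ (Fin n)) :=
  (fun y => ((V.orthogonalProjection y : V) : EuclideanSpace ℝ (Fin n))) '' K

lemma supp_projSet_eq {n : ℕ} (V : Submodule ℝ (EuclideanSpace ℝ (Fin n)))
    (K : Set (EuclideanSpace ℝ (Fin n))) {ξ : EuclideanSpace ℝ (Fin n)} (hξ : ξ ∈ V) :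
    supp (projSet V K) ξ = supp K ξ := by
  unfold supp projSet
  rw [Set.image_image]
  congr 1
  apply Set.image_congr'
  intro y
  have h1 : y - (V.orthogonalProjection y : EuclideanSpace ℝ (Fin n)) ∈ Vᗮ :=
    V.sub_starProjection_mem_orthogonal y
  have h2 : (inner ℝ ξ (y - (V.orthogonalProjection y : EuclideanSpace ℝ (Fin n))) : ℝ) = 0 := by
    exact h1 ξ hξ
  rw [inner_sub_right] at h2
  linarith

lemma sec_iff {n : ℕ} {K : Set (EuclideanSpace ℝ (Fin n))}
    (hKc : IsCompact K) (hKv : Convex ℝ K) (hne : K.Nonempty)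
    (ξ : EuclideanSpace ℝ (Fin n)) (t : ℝ) :
    (∃ x ∈ K, (inner ℝ ξ x : ℝ) = t) ↔ -(supp K (-ξ)) ≤ t ∧ t ≤ supp K ξ := by
  have hcont : Continuous fun y : EuclideanSpace ℝ (Fin n) => (inner ℝ ξ y : ℝ) :=
    continuous_const.inner continuous_id
  set S : Set ℝ := (fun y => (inner ℝ ξ y : ℝ)) '' K with hS
  have hSc : IsCompact S := hKc.image hcont
  have hSne : S.Nonempty := hne.image _
  have hsup : supp K ξ = sSup S := rfl
  have hneg : supp K (-ξ) = -sInf S := by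
    unfold supp
    have : (fun y : EuclideanSpace ℝ (Fin n) => (inner ℝ (-ξ) y : ℝ)) '' K = -S := by
      rw [hS, ← Set.image_neg_eq_neg, Set.image_image]
      apply Set.image_congr'
      intro y; rw [inner_neg_left]
    rw [this, Real.sInf_def, neg_neg]
  have hsupmem : sSup S ∈ S := hSc.sSup_mem hSne
  have hinfmem : sInf S ∈ S := hSc.sInf_mem hSne
  constructor
  · rintro ⟨x, hx, rfl⟩
    have hm : (inner ℝ ξ x : ℝ) ∈ S := Set.mem_image_of_mem _ hx
    exact ⟨by rw [hneg]; simpa using csInf_le hSc.bddBelow hm,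
      by rw [hsup]; exact le_csSup hSc.bddAbove hm⟩
  · rintro ⟨h1, h2⟩
    have hpre : IsPreconnected S := (hKv.isPreconnected).image _ hcont.continuousOn
    have hord : S.OrdConnected := hpre.ordConnected
    have : t ∈ S := hord.out hinfmem hsupmem ⟨by rw [hneg] at h1; linarith, by rwa [hsup] at h2⟩
    obtain ⟨x, hx, hxt⟩ := this
    exact ⟨x, hx, hxt⟩

lemma supp_pos {n : ℕ} {K : Set (EuclideanSpace ℝ (Fin n))}
    (hKc : IsCompact K) (hK0 : (0 : EuclideanSpace ℝ (Fin n)) ∈ interior K)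
    {ξ : EuclideanSpace ℝ (Fin n)} (hξ : ‖ξ‖ = 1) : 0 < supp K ξ := by
  obtain ⟨ε, hε, hball⟩ := Metric.mem_nhds_iff.mp (mem_interior_iff_mem_nhds.mp hK0)
  have hmem : (ε / 2) • ξ ∈ K := by
    apply hball
    simp [mem_ball_iff_norm, norm_smul, hξ, abs_of_pos hε]
    linarith
  have : (inner ℝ ξ ((ε/2) • ξ) : ℝ) ≤ supp K ξ :=
    le_csSup (hKc.image (continuous_const.inner continuous_id)).bddAbove
      (Set.mem_image_of_mem _ hmem)
  rw [real_inner_smul_right, real_inner_self_eq_norm_sq, hξ] at this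
  norm_num at this
  linarith

lemma mixing {n : ℕ} {K L : Set (EuclideanSpace ℝ (Fin n))}
    {ξ : EuclideanSpace ℝ (Fin n)} {t : ℝ}
    (hKv : Convex ℝ K) (hLcl : IsClosed L)
    (hor : ∀ x, (x ∈ K ∨ -x ∈ K) ↔ (x ∈ L ∨ -x ∈ L))
    (hand : ∀ x, (x ∈ K ∧ -x ∈ K) ↔ (x ∈ L ∧ -x ∈ L))
    (hp : ∃ p ∈ L, (inner ℝ ξ p : ℝ) = t)
    (hq : ∃ q ∈ L, (inner ℝ ξ q : ℝ) = -t)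
    (hK : ¬ ∃ x ∈ K, (inner ℝ ξ x : ℝ) = -t) : False := by
  obtain ⟨p, hpL, hpt⟩ := hp
  obtain ⟨q', hq'L, hq't⟩ := hq
  set q := -q' with hqdef
  have hqt : (inner ℝ ξ q : ℝ) = t := by rw [hqdef, inner_neg_right, hq't, neg_neg]
  have hpK : p ∈ K := by
    rcases (hor p).mpr (Or.inl hpL) with h | h
    · exact h
    · exact absurd ⟨-p, h, by rw [inner_neg_right, hpt]⟩ hK
  have hqK : q ∈ K := by
    rcases (hor q).mpr (Or.inr (by rwa [hqdef, neg_neg])) with h | h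
    · exact h
    · exact absurd ⟨-q, h, by rw [inner_neg_right, hqt]⟩ hK
  have hseg : segment ℝ p q ⊆ K := hKv.segment_subset hpK hqK
  have hlevel : ∀ z ∈ segment ℝ p q, (inner ℝ ξ z : ℝ) = t := by
    rintro z ⟨a, b, ha, hb, hab, rfl⟩
    rw [inner_add_right, real_inner_smul_right, real_inner_smul_right, hpt, hqt]
    linear_combination t * hab
  have hcover : segment ℝ p q ⊆ L ∪ (-L) := by
    intro z hz
    rcases (hor z).mp (Or.inl (hseg hz)) with h | h
    · exact Or.inl h
    · exact Or.inr (Set.mem_neg.mpr h)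
  have hpre : IsPreconnected (segment ℝ p q) := (convex_segment p q).isPreconnected
  have := isPreconnected_closed_iff.mp hpre L (-L) hLcl hLcl.neg hcover
    ⟨p, left_mem_segment ℝ p q, hpL⟩
    ⟨q, right_mem_segment ℝ p q, Set.mem_neg.mpr (by rwa [hqdef, neg_neg])⟩
  obtain ⟨z, hzseg, hzL, hznL⟩ := this
  have : -z ∈ K := ((hand z).mpr ⟨hzL, Set.mem_neg.mp hznL⟩).2
  exact hK ⟨-z, this, by rw [inner_neg_right, hlevel z hzseg]⟩

lemma pair_min_max (x y : ℝ) : ({x, y} : Set ℝ) = {min x y, max x y} := by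
  rcases le_total x y with h | h
  · rw [min_eq_left h, max_eq_right h]
  · rw [min_eq_right h, max_eq_left h]
    exact Set.pair_comm x y

theorem diff_symm_imp_proj_support_pairs {n : ℕ} (K L : Set (EuclideanSpace ℝ (Fin n)))
    (hKc : IsCompact K) (hKv : Convex ℝ K)
    (hK0 : (0 : EuclideanSpace ℝ (Fin n)) ∈ interior K)
    (hLc : IsCompact L) (hLv : Convex ℝ L)
    (hL0 : (0 : EuclideanSpace ℝ (Fin n)) ∈ interior L)
    (h : K \ L = -(L \ K))
    (V : Submodule ℝ (EuclideanSpace ℝ (Fin n))) :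
    ∀ ξ ∈ V, ‖ξ‖ = 1 →
      ({supp (projSet V K) ξ, supp (projSet V K) (-ξ)} : Set ℝ) =
        {supp (projSet V L) ξ, supp (projSet V L) (-ξ)} := by
  intro ξ hξV hξ1
  rw [supp_projSet_eq V K hξV, supp_projSet_eq V K (V.neg_mem hξV),
      supp_projSet_eq V L hξV, supp_projSet_eq V L (V.neg_mem hξV)]
  have hpt : ∀ x, (x ∈ K ∧ x ∉ L) ↔ (-x ∈ L ∧ -x ∉ K) := by
    intro x
    have := Set.ext_iff.mp h x
    simpa [Set.mem_neg, Set.mem_diff] using this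
  have hor : ∀ x, (x ∈ K ∨ -x ∈ K) ↔ (x ∈ L ∨ -x ∈ L) := by
    intro x
    have h1 := hpt x; have h2 := hpt (-x); rw [neg_neg] at h2; tauto
  have hand : ∀ x, (x ∈ K ∧ -x ∈ K) ↔ (x ∈ L ∧ -x ∈ L) := by
    intro x
    have h1 := hpt x; have h2 := hpt (-x); rw [neg_neg] at h2; tauto
  have hor' : ∀ x, (x ∈ L ∨ -x ∈ L) ↔ (x ∈ K ∨ -x ∈ K) := fun x => (hor x).symm
  have hand' : ∀ x, (x ∈ L ∧ -x ∈ L) ↔ (x ∈ K ∧ -x ∈ K) := fun x => (hand x).symm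
  have hKne : K.Nonempty := ⟨0, interior_subset hK0⟩
  have hLne : L.Nonempty := ⟨0, interior_subset hL0⟩
  set a := supp K ξ with hadef
  set a' := supp K (-ξ) with ha'def
  set b := supp L ξ with hbdef
  set b' := supp L (-ξ) with hb'def
  have hnξ1 : ‖-ξ‖ = 1 := by rwa [norm_neg]
  have ha : 0 < a := supp_pos hKc hK0 hξ1
  have ha' : 0 < a' := supp_pos hKc hK0 hnξ1
  have hb : 0 < b := supp_pos hLc hL0 hξ1
  have hb' : 0 < b' := supp_pos hLc hL0 hnξ1
  have secK := sec_iff hKc hKv hKne ξ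
  have secL := sec_iff hLc hLv hLne ξ
  -- min inequalities via mixing
  have key : ∀ {C D : Set (EuclideanSpace ℝ (Fin n))} (c c' d d' : ℝ),
      Convex ℝ C → IsClosed D →
      (∀ x, (x ∈ C ∨ -x ∈ C) ↔ (x ∈ D ∨ -x ∈ D)) →
      (∀ x, (x ∈ C ∧ -x ∈ C) ↔ (x ∈ D ∧ -x ∈ D)) →
      (∀ t, (∃ x ∈ C, (inner ℝ ξ x : ℝ) = t) ↔ -c' ≤ t ∧ t ≤ c) →
      (∀ t, (∃ x ∈ D, (inner ℝ ξ x : ℝ) = t) ↔ -d' ≤ t ∧ t ≤ d) →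
      0 < c → 0 < c' → 0 < d → 0 < d' →
      min d d' ≤ min c c' := by
    intro C D c c' d d' hCv hDcl horCD handCD secC secD hc hc' hd hd'
    by_contra hcon
    push_neg at hcon
    have hmpos : 0 < min d d' := lt_min hd hd'
    have hDmem1 : ∃ p ∈ D, (inner ℝ ξ p : ℝ) = min d d' :=
      (secD (min d d')).mpr ⟨by linarith, min_le_left d d'⟩
    have hDmem2 : ∃ q ∈ D, (inner ℝ ξ q : ℝ) = -(min d d') :=
      (secD (-(min d d'))).mpr ⟨by simp [min_le_right], by linarith⟩
    rcases min_lt_iff.mp hcon with hlt | hlt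
    · -- c < min d d' ; mixing with t := -(min d d')
      refine mixing hCv hDcl horCD handCD hDmem2 (by simpa using hDmem1) ?_
      intro hx
      have hx' : ∃ x ∈ C, (inner ℝ ξ x : ℝ) = min d d' := by simpa using hx
      have := ((secC (min d d')).mp hx').2
      linarith
    · -- c' < min d d' ; mixing with t := min d d'
      refine mixing hCv hDcl horCD handCD hDmem1 hDmem2 ?_
      intro hx
      have := ((secC (-(min d d'))).mp hx).1
      linarith
  have hmin1 : min b b' ≤ min a a' :=
    key a a' b b' hKv hLc.isClosed hor hand secK secL ha ha' hb hb'
  have hmin2 : min a a' ≤ min b b' :=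
    key b b' a a' hLv hKc.isClosed hor' hand' secL secK hb hb' ha ha'
  have hminEq : min a a' = min b b' := le_antisymm hmin2 hmin1
  -- max inequalities
  have keymax : ∀ {C D : Set (EuclideanSpace ℝ (Fin n))} (c c' d d' : ℝ),
      (∀ x, (x ∈ C ∨ -x ∈ C) ↔ (x ∈ D ∨ -x ∈ D)) →
      (∀ t, (∃ x ∈ C, (inner ℝ ξ x : ℝ) = t) ↔ -c' ≤ t ∧ t ≤ c) →
      (∀ t, (∃ x ∈ D, (inner ℝ ξ x : ℝ) = t) ↔ -d' ≤ t ∧ t ≤ d) →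
      0 < c → 0 < c' →
      max c c' ≤ max d d' := by
    intro C D c c' d d' horCD secC secD hc hc'
    have h1 : c ≤ max d d' := by
      obtain ⟨x, hxC, hxa⟩ := (secC c).mpr ⟨by linarith, le_refl c⟩
      rcases (horCD x).mp (Or.inl hxC) with hxD | hxD
      · exact le_trans ((secD c).mp ⟨x, hxD, hxa⟩).2 (le_max_left _ _)
      · have := ((secD (-c)).mp ⟨-x, hxD, by rw [inner_neg_right, hxa]⟩).1
        exact le_trans (by linarith) (le_max_right _ _)
    have h2 : c' ≤ max d d' := by
      obtain ⟨x, hxC, hxa⟩ := (secC (-c')).mpr ⟨le_refl _, by linarith⟩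
      rcases (horCD x).mp (Or.inl hxC) with hxD | hxD
      · have := ((secD (-c')).mp ⟨x, hxD, hxa⟩).1
        exact le_trans (by linarith) (le_max_right _ _)
      · have := ((secD c').mp ⟨-x, hxD, by rw [inner_neg_right, hxa, neg_neg]⟩).2
        exact le_trans this (le_max_left _ _)
    exact max_le h1 h2
  have hmax1 : max a a' ≤ max b b' := keymax a a' b b' hor secK secL ha ha'
  have hmax2 : max b b' ≤ max a a' := keymax b b' a a' hor' secL secK hb hb'
  have hmaxEq : max a a' = max b b' := le_antisymm hmax1 hmax2
  rw [pair_min_max a a', pair_min_max b b', hminEq, hmaxEq]
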